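/- Let a,b≥0 with ab<1. Fix d∈ℕ and 0<θ₁<…<θ_d<θ_{d+1}=1, and let cone° := {x=(x₁,…,x_{d+1})∈ℝ^{d+1} : 0 < x_j−x_{j−1} < θ_j−θ_{j−1} for j=1,…,d+1, with the conventions x₀:=0 and θ₀:=0}. Then for every open subset U ⊆ ℝ^{d+1}, inf_{x∈U} I^{(a,b)}_{θ₁,…,θ_{d+1}}(x) = inf_{x∈U∩cone°} I^{(a,b)}_{θ₁,…,θ_{d+1}}(x). -/

import Mathlib

open scoped Classical

/-- The space `C₀([0,1],ℝ)` of continuous functions on `[0,1]` vanishing at `0`, with the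
supremum-norm (uniform) topology. -/
abbrev C0Sp : Type := {f : C(Set.Icc (0:ℝ) 1, ℝ) // f ⟨0, Set.left_mem_Icc.mpr zero_le_one⟩ = 0}

/-- Extension of `f : C([0,1],ℝ)` to `ℝ` by clamping the argument to `[0,1]`. -/
noncomputable def extendF (f : C(Set.Icc (0:ℝ) 1, ℝ)) : ℝ → ℝ :=
  fun t => f (Set.projIcc 0 1 zero_le_one t)

/-- Evaluation of `f ∈ C₀([0,1],ℝ)` at `t ∈ [0,1]`. -/
noncomputable def evalC0 (f : C0Sp) (t : ℝ) : ℝ := extendF f.val t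

/-- The convex envelope on `[0,1]`: the largest convex function below `F` on `[0,1]`. -/
noncomputable def convEnv (F : ℝ → ℝ) : ℝ → ℝ := fun x =>
  sSup {y : ℝ | ∃ g : ℝ → ℝ, ConvexOn ℝ (Set.Icc (0:ℝ) 1) g ∧
    (∀ t ∈ Set.Icc (0:ℝ) 1, g t ≤ F t) ∧ y = g x}

/-- The entropy function `H(x) = x log x + (1-x) log(1-x)` (for `x ∈ [0,1]`;
note `Real.log 0 = 0` implements the convention `0·log 0 = 0`). -/
noncomputable def Hent (x : ℝ) : ℝ := x * Real.log x + (1 - x) * Real.log (1 - x)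

/-- `J(a,b)`. -/
noncomputable def Jfun (a b : ℝ) : ℝ :=
  if 1 < a then a / (1 + a) ^ 2 else if 1 < b then b / (1 + b) ^ 2 else 1 / 4

/-- `G_*(x) = min(max(f̃'(x), a/(1+a)), 1/(1+b))`, where `f̃` is the convex envelope of `F`. -/
noncomputable def Gstar (a b : ℝ) (F : ℝ → ℝ) (x : ℝ) : ℝ :=
  min (max (deriv (convEnv F) x) (a / (1 + a))) (1 / (1 + b))

/-- The rate function `I^{(a,b)} : C₀([0,1],ℝ) → [0,∞]` of Theorem 1.2.  A function
`f : [0,1] → ℝ` with `f(0)=0` is absolutely continuous with `0 ≤ f' ≤ 1` a.e. if and only if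
it is nondecreasing and 1-Lipschitz, in which case `f'` (defined a.e.) is `deriv f`. -/
noncomputable def rateI (a b : ℝ) (f : C0Sp) : EReal :=
  if MonotoneOn (extendF f.val) (Set.Icc (0:ℝ) 1) ∧
      LipschitzOnWith 1 (extendF f.val) (Set.Icc (0:ℝ) 1) then
    (((∫ x in (0:ℝ)..1, Hent (deriv (extendF f.val) x)) +
      (∫ x in (0:ℝ)..1,
        (deriv (convEnv (extendF f.val)) x * Real.log (Gstar a b (extendF f.val) x) +
          (1 - deriv (convEnv (extendF f.val)) x) *
            Real.log (1 - Gstar a b (extendF f.val) x))) -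
      Real.log (Jfun a b) : ℝ) : EReal)
  else ⊤

/-- The finite-dimensional rate function
`I^{(a,b)}_{θ₁,…,θ_{d+1}}(x) = inf{ I^{(a,b)}(f) : f ∈ C₀([0,1],ℝ), f(θ_j) = x_j ∀j }`. -/
noncomputable def rateFd (a b : ℝ) (k : ℕ) (θ : Fin (k+1) → ℝ) (x : Fin (k+1) → ℝ) : EReal :=
  ⨅ f : {f : C0Sp // ∀ j, evalC0 f (θ j) = x j}, rateI a b f.val

namespace Stmt16Aux

open Set MeasureTheory Filter

/-! ### The clamp map -/

noncomputable def clampR (t : ℝ) : ℝ := ((Set.projIcc (0:ℝ) 1 zero_le_one t : Set.Icc (0:ℝ) 1) : ℝ)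

lemma clampR_mem (t : ℝ) : clampR t ∈ Set.Icc (0:ℝ) 1 := (Set.projIcc (0:ℝ) 1 zero_le_one t).2

lemma clampR_of_mem {t : ℝ} (ht : t ∈ Set.Icc (0:ℝ) 1) : clampR t = t := by
  simp only [clampR, Set.projIcc_of_mem zero_le_one ht]

lemma monotone_clampR : Monotone clampR := fun _ _ hst =>
  Set.monotone_projIcc zero_le_one hst

lemma clampR_dist (s t : ℝ) : |clampR s - clampR t| ≤ |s - t| := by
  simp only [clampR, Set.coe_projIcc]
  calc |max 0 (min 1 s) - max 0 (min 1 t)| ≤ max 0 |min 1 s - min 1 t| := by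
        simpa using abs_max_sub_max_le_max (0:ℝ) (min 1 s) 0 (min 1 t)
  _ = |min 1 s - min 1 t| := max_eq_right (abs_nonneg (min 1 s - min 1 t))
  _ ≤ max 0 |s - t| := by simpa using abs_min_sub_min_le_max (1:ℝ) s 1 t
  _ = |s - t| := max_eq_right (abs_nonneg (s - t))

/-! ### Derivatives of monotone 1-Lipschitz functions -/

lemma slope_mem_Icc {F : ℝ → ℝ} {x y : ℝ} (hne : y ≠ x)
    (h : ∀ u v : ℝ, (u = x ∨ u = y) → (v = x ∨ v = y) → u ≤ v →
      F u ≤ F v ∧ F v - F u ≤ v - u) :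
    slope F x y ∈ Set.Icc (0:ℝ) 1 := by
  rcases hne.lt_or_gt with hlt | hlt
  · rw [slope_comm, slope_def_field]
    obtain ⟨hm, hl⟩ := h y x (Or.inr rfl) (Or.inl rfl) hlt.le
    exact ⟨div_nonneg (by linarith) (by linarith),
      (div_le_one (by linarith)).mpr (by linarith)⟩
  · rw [slope_def_field]
    obtain ⟨hm, hl⟩ := h x y (Or.inl rfl) (Or.inr rfl) hlt.le
    exact ⟨div_nonneg (by linarith) (by linarith),
      (div_le_one (by linarith)).mpr (by linarith)⟩

lemma deriv_mem_Icc_of_global {F : ℝ → ℝ} (hm : Monotone F)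
    (hl : ∀ u v : ℝ, u ≤ v → F v - F u ≤ v - u) (x : ℝ) :
    deriv F x ∈ Set.Icc (0:ℝ) 1 := by
  by_cases hd : DifferentiableAt ℝ F x
  · have ht := hd.hasDerivAt
    rw [hasDerivAt_iff_tendsto_slope] at ht
    refine isClosed_Icc.mem_of_tendsto ht ?_
    filter_upwards [self_mem_nhdsWithin] with y hy
    exact slope_mem_Icc (by simpa using hy) (fun u v _ _ huv => ⟨hm huv, hl u v huv⟩)
  · rw [deriv_zero_of_not_differentiableAt hd]
    exact ⟨le_refl _, zero_le_one⟩

lemma deriv_mem_Icc_of_Ioo {F : ℝ → ℝ}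
    (h : ∀ u v : ℝ, u ∈ Set.Ioo (0:ℝ) 1 → v ∈ Set.Ioo (0:ℝ) 1 → u ≤ v →
      F u ≤ F v ∧ F v - F u ≤ v - u)
    {x : ℝ} (hx : x ∈ Set.Ioo (0:ℝ) 1) :
    deriv F x ∈ Set.Icc (0:ℝ) 1 := by
  by_cases hd : DifferentiableAt ℝ F x
  · have ht := hd.hasDerivAt
    rw [hasDerivAt_iff_tendsto_slope] at ht
    refine isClosed_Icc.mem_of_tendsto ht ?_
    have hIoo : Set.Ioo (0:ℝ) 1 ∈ nhdsWithin x {x}ᶜ :=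
      nhdsWithin_le_nhds (Ioo_mem_nhds hx.1 hx.2)
    filter_upwards [self_mem_nhdsWithin, hIoo] with y hy hyI
    refine slope_mem_Icc (by simpa using hy) (fun u v hu hv huv => ?_)
    have hu' : u ∈ Set.Ioo (0:ℝ) 1 := by rcases hu with rfl | rfl; exacts [hx, hyI]
    have hv' : v ∈ Set.Ioo (0:ℝ) 1 := by rcases hv with rfl | rfl; exacts [hx, hyI]
    exact h u v hu' hv' huv
  · rw [deriv_zero_of_not_differentiableAt hd]; exact ⟨le_refl _, zero_le_one⟩

/-! ### Elementary log inequalities -/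

lemma neg_one_le_mul_log {u : ℝ} (h0 : 0 ≤ u) (h1 : u ≤ 1) : -1 ≤ u * Real.log u := by
  rcases eq_or_lt_of_le h0 with h | h
  · simp [← h]
  · have hlog : Real.log u⁻¹ ≤ u⁻¹ - 1 := Real.log_le_sub_one_of_pos (by positivity)
    rw [Real.log_inv] at hlog
    have h2 := mul_le_mul_of_nonneg_left hlog h0
    have hu : u * u⁻¹ = 1 := mul_inv_cancel₀ h.ne'
    nlinarith

lemma gibbs {q G c : ℝ} (hq0 : 0 ≤ q) (hq1 : q ≤ 1) (hG0 : 0 < G) (hG1 : G < 1)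
    (hc0 : 0 ≤ c) (hc1 : c ≤ 1) (hsign : (G - c) * (q - c) ≤ 0) :
    q * Real.log G + (1 - q) * Real.log (1 - G) ≤
      q * Real.log c + (1 - q) * Real.log (1 - c) := by
  rcases eq_or_lt_of_le hc0 with h0 | h0
  · have hqle : q ≤ 0 := by nlinarith
    have hq : q = 0 := le_antisymm hqle hq0
    subst hq
    rw [← h0]
    simp only [zero_mul, sub_zero, one_mul, zero_add, Real.log_one]
    exact Real.log_nonpos (by linarith) (by linarith)
  rcases eq_or_lt_of_le hc1 with h1 | h1
  · have hqge : 1 ≤ q := by nlinarith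
    have hq : q = 1 := le_antisymm hq1 hqge
    subst hq
    rw [h1]
    simp only [one_mul, sub_self, zero_mul, add_zero, Real.log_one]
    exact Real.log_nonpos (by linarith) (by linarith)
  · have l1 : Real.log G - Real.log c ≤ G / c - 1 := by
      rw [← Real.log_div hG0.ne' h0.ne']
      exact Real.log_le_sub_one_of_pos (div_pos hG0 h0)
    have l2 : Real.log (1 - G) - Real.log (1 - c) ≤ (1 - G) / (1 - c) - 1 := by
      rw [← Real.log_div (by linarith) (by linarith)]
      exact Real.log_le_sub_one_of_pos (div_pos (by linarith) (by linarith))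
    have e1 := mul_le_mul_of_nonneg_left l1 hq0
    have e2 := mul_le_mul_of_nonneg_left l2 (by linarith : (0:ℝ) ≤ 1 - q)
    have hc' : c ≠ 0 := ne_of_gt h0
    have hc'' : (1:ℝ) - c ≠ 0 := ne_of_gt (by linarith)
    have hcc : 0 < c * (1 - c) := by nlinarith
    have key2 : (q * (G / c - 1) + (1 - q) * ((1 - G) / (1 - c) - 1)) * (c * (1 - c))
        = (G - c) * (q - c) := by
      field_simp
      ring
    have hsum : q * (G / c - 1) + (1 - q) * ((1 - G) / (1 - c) - 1) ≤ 0 := by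
      by_contra hX
      push_neg at hX
      nlinarith [mul_pos hX hcc]
    linarith

lemma phi_lb {α β v : ℝ} (hα0 : 0 ≤ α) (hα1 : α < 1) (hβ0 : 0 < β) (hβ1 : β ≤ 1)
    (hαβ : α ≤ β) (hv0 : 0 ≤ v) (hv1 : v ≤ 1) :
    -(2 - Real.log β - Real.log (1 - α)) ≤
      v * Real.log (min (max v α) β) + (1 - v) * Real.log (1 - min (max v α) β) := by
  set c := min (max v α) β with hc
  have hc0 : 0 ≤ c := le_min (le_trans hv0 (le_max_left _ _)) hβ0.le
  have hc1 : c ≤ 1 := le_trans (min_le_right _ _) hβ1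
  have hlogβ : Real.log β ≤ 0 := Real.log_nonpos hβ0.le hβ1
  have hlog1α : Real.log (1 - α) ≤ 0 := Real.log_nonpos (by linarith) (by linarith)
  have T1 : Real.log β - 1 ≤ v * Real.log c := by
    rcases eq_or_lt_of_le hv0 with h | hvpos
    · rw [← h]; simp only [zero_mul]; linarith
    · by_cases hvc : v ≤ c
      · have h1 := mul_le_mul_of_nonneg_left (Real.log_le_log hvpos hvc) hv0
        have h2 := neg_one_le_mul_log hv0 hv1
        linarith
      · push_neg at hvc
        have hcβ : c = β := by
          rcases le_or_gt (max v α) β with h | h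
          · exfalso
            have : v ≤ c := by rw [hc, min_eq_left h]; exact le_max_left _ _
            linarith
          · rw [hc, min_eq_right h.le]
        rw [hcβ]
        nlinarith [hlogβ]
  have T2 : Real.log (1 - α) - 1 ≤ (1 - v) * Real.log (1 - c) := by
    by_cases hcv : c ≤ v
    · rcases eq_or_lt_of_le hv1 with h | h
      · rw [h]; simp only [sub_self, zero_mul]; linarith
      · have h1 : (1 - v) * Real.log (1 - v) ≤ (1 - v) * Real.log (1 - c) :=
          mul_le_mul_of_nonneg_left (Real.log_le_log (by linarith) (by linarith)) (by linarith)
        have h2 := neg_one_le_mul_log (by linarith : (0:ℝ) ≤ 1 - v) (by linarith)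
        linarith
    · push_neg at hcv
      have hcα : c ≤ α := by
        have hmax : max v α = α := by
          rcases le_total v α with h | h
          · exact max_eq_right h
          · exfalso
            have : c ≤ v := by
              rw [hc, max_eq_left h]; exact min_le_left _ _
            linarith
        calc c ≤ max v α := min_le_left _ _
        _ = α := hmax
      have h1 : Real.log (1 - α) ≤ Real.log (1 - c) := Real.log_le_log (by linarith) (by linarith)
      nlinarith [h1, hlog1α]
  linarith

lemma phi_ub {α β v : ℝ} (hα0 : 0 ≤ α) (hβ0 : 0 < β) (hβ1 : β ≤ 1) (hv0 : 0 ≤ v) (hv1 : v ≤ 1) :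
    v * Real.log (min (max v α) β) + (1 - v) * Real.log (1 - min (max v α) β) ≤ 0 := by
  set c := min (max v α) β with hc
  have hc0 : 0 ≤ c := le_min (le_trans hv0 (le_max_left _ _)) hβ0.le
  have hc1 : c ≤ 1 := le_trans (min_le_right _ _) hβ1
  have l1 := Real.log_nonpos hc0 hc1
  have l2 := Real.log_nonpos (by linarith : (0:ℝ) ≤ 1 - c) (by linarith)
  nlinarith

lemma key {α β lam v : ℝ} (hα0 : 0 ≤ α) (hα1 : α < 1) (hβ0 : 0 < β) (hβ1 : β ≤ 1)
    (hαβ : α ≤ β) (hl0 : 0 < lam) (hl1 : lam < 1) (hv0 : 0 ≤ v) (hv1 : v ≤ 1) :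
    ((1-lam)*v + lam/2) * Real.log (min (max ((1-lam)*v + lam/2) α) β) +
      (1 - ((1-lam)*v + lam/2)) * Real.log (1 - min (max ((1-lam)*v + lam/2) α) β) ≤
    v * Real.log (min (max v α) β) + (1 - v) * Real.log (1 - min (max v α) β) +
      lam * (2 - Real.log β - Real.log (1 - α)) := by
  set p := (1-lam)*v + lam/2 with hp
  set G := min (max p α) β with hG
  set c := min (max v α) β with hc
  have hp0 : 0 < p := by rw [hp]; nlinarith
  have hp1 : p < 1 := by rw [hp]; nlinarith
  have hG0 : 0 < G := lt_min (lt_of_lt_of_le hp0 (le_max_left _ _)) hβ0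
  have hG1 : G < 1 := lt_of_le_of_lt (min_le_left _ _) (max_lt hp1 hα1)
  have hGα : α ≤ G := le_min (le_max_right _ _) hαβ
  have hGβ : G ≤ β := min_le_right _ _
  have hc0 : 0 ≤ c := le_min (le_trans hv0 (le_max_left _ _)) hβ0.le
  have hc1 : c ≤ 1 := le_trans (min_le_right _ _) hβ1
  have hsign : (G - c) * (v - c) ≤ 0 := by
    rcases lt_or_ge v α with h | h
    · have hceq : c = α := by rw [hc, max_eq_right h.le, min_eq_left hαβ]
      rw [hceq]
      have h1 : 0 ≤ G - α := by linarith
      have h2 : v - α ≤ 0 := by linarith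
      nlinarith
    · rcases le_or_gt v β with h2 | h2
      · have hceq : c = v := by rw [hc, max_eq_left h, min_eq_left h2]
        rw [hceq]; simp
      · have hceq : c = β := by rw [hc, max_eq_left h, min_eq_right h2.le]
        rw [hceq]
        have h1 : G - β ≤ 0 := by linarith
        have h3 : 0 ≤ v - β := by linarith
        nlinarith
  have hgb := gibbs hv0 hv1 hG0 hG1 hc0 hc1 hsign
  have hlogG : Real.log G ≤ 0 := Real.log_nonpos hG0.le hG1.le
  have hlogG' : Real.log (1 - G) ≤ 0 := Real.log_nonpos (by linarith) (by linarith)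
  have hlb := phi_lb hα0 hα1 hβ0 hβ1 hαβ hv0 hv1
  rw [← hc] at hlb
  have hlin : p * Real.log G + (1 - p) * Real.log (1 - G)
      = (1-lam) * (v * Real.log G + (1-v) * Real.log (1-G))
        + lam * ((1/2) * Real.log G + (1/2) * Real.log (1-G)) := by
    rw [hp]; ring
  have e1 : (1-lam) * (v * Real.log G + (1-v) * Real.log (1-G))
      ≤ (1-lam) * (v * Real.log c + (1-v) * Real.log (1-c)) :=
    mul_le_mul_of_nonneg_left hgb (by linarith)
  have e2 : lam * ((1/2) * Real.log G + (1/2) * Real.log (1-G)) ≤ 0 := by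
    have : (1/2) * Real.log G + (1/2) * Real.log (1-G) ≤ 0 := by linarith
    nlinarith
  have e3 : lam * (-(v * Real.log c + (1-v) * Real.log (1-c)))
      ≤ lam * (2 - Real.log β - Real.log (1 - α)) :=
    mul_le_mul_of_nonneg_left (by linarith) hl0.le
  calc p * Real.log G + (1 - p) * Real.log (1 - G)
      = (1-lam) * (v * Real.log G + (1-v) * Real.log (1-G))
        + lam * ((1/2) * Real.log G + (1/2) * Real.log (1-G)) := hlin
  _ ≤ (1-lam) * (v * Real.log c + (1-v) * Real.log (1-c)) + 0 := add_le_add e1 e2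
  _ = (v * Real.log c + (1-v) * Real.log (1-c))
        + lam * (-(v * Real.log c + (1-v) * Real.log (1-c))) := by ring
  _ ≤ v * Real.log c + (1 - v) * Real.log (1 - c)
        + lam * (2 - Real.log β - Real.log (1 - α)) := by linarith

lemma keyA {lam u : ℝ} (hl0 : 0 < lam) (hl1 : lam < 1) (hu0 : 0 ≤ u) (hu1 : u ≤ 1) :
    Hent ((1-lam)*u + lam/2) ≤ Hent u + lam * 2 := by
  have h := key (α := 0) (β := 1) (lam := lam) (v := u) le_rfl one_pos one_pos le_rfl
    zero_le_one hl0 hl1 hu0 hu1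
  have hp0 : (0:ℝ) ≤ (1-lam)*u + lam/2 := by nlinarith
  have hp1 : (1-lam)*u + lam/2 ≤ 1 := by nlinarith
  rw [max_eq_left hp0, min_eq_left hp1, max_eq_left hu0, min_eq_left hu1] at h
  simp only [sub_zero, Real.log_one] at h
  simp only [Hent]
  linarith

/-! ### Convexity helpers -/

lemma convexOn_linComb {g : ℝ → ℝ} (hg : ConvexOn ℝ (Set.Icc (0:ℝ) 1) g) (c e d : ℝ)
    (hc : 0 ≤ c) : ConvexOn ℝ (Set.Icc (0:ℝ) 1) (fun t => c * g t + (e * t + d)) := by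
  refine ⟨convex_Icc _ _, fun u hu v hv p q hp hq hpq => ?_⟩
  have hgle := hg.2 hu hv hp hq hpq
  simp only [smul_eq_mul] at hgle ⊢
  have h2 := mul_le_mul_of_nonneg_left hgle hc
  have hd : d * (p + q) = d * 1 := by rw [hpq]
  nlinarith [h2, hd]

/-! ### Convex envelope facts -/

def SSet (F : ℝ → ℝ) (x : ℝ) : Set ℝ :=
  {y : ℝ | ∃ g : ℝ → ℝ, ConvexOn ℝ (Set.Icc (0:ℝ) 1) g ∧
    (∀ t ∈ Set.Icc (0:ℝ) 1, g t ≤ F t) ∧ y = g x}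

lemma convEnv_eq_sSup (F : ℝ → ℝ) (x : ℝ) : convEnv F x = sSup (SSet F x) := rfl

lemma bddAbove_SSet {F : ℝ → ℝ} {x : ℝ} (hx : x ∈ Set.Icc (0:ℝ) 1) :
    BddAbove (SSet F x) := by
  refine ⟨F x, ?_⟩
  rintro y ⟨g, hg1, hg2, rfl⟩
  exact hg2 x hx

lemma le_convEnv {F g : ℝ → ℝ} (hg1 : ConvexOn ℝ (Set.Icc (0:ℝ) 1) g)
    (hg2 : ∀ t ∈ Set.Icc (0:ℝ) 1, g t ≤ F t) {x : ℝ} (hx : x ∈ Set.Icc (0:ℝ) 1) :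
    g x ≤ convEnv F x :=
  le_csSup (bddAbove_SSet hx) ⟨g, hg1, hg2, rfl⟩

lemma SSet_nonempty {F : ℝ → ℝ} (hFnn : ∀ t ∈ Set.Icc (0:ℝ) 1, (0:ℝ) ≤ F t) (x : ℝ) :
    (SSet F x).Nonempty :=
  ⟨0, fun _ => 0, convexOn_const 0 (convex_Icc _ _), fun t ht => hFnn t ht, rfl⟩

lemma convEnv_le {F : ℝ → ℝ} (hFnn : ∀ t ∈ Set.Icc (0:ℝ) 1, (0:ℝ) ≤ F t)
    {x : ℝ} (hx : x ∈ Set.Icc (0:ℝ) 1) : convEnv F x ≤ F x := by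
  refine csSup_le (SSet_nonempty hFnn x) ?_
  rintro y ⟨g, hg1, hg2, rfl⟩
  exact hg2 x hx

section EnvProps

variable {F : ℝ → ℝ}

def goodF (F : ℝ → ℝ) : Prop :=
  (∀ u v : ℝ, u ∈ Set.Icc (0:ℝ) 1 → v ∈ Set.Icc (0:ℝ) 1 → u ≤ v →
      0 ≤ F v - F u ∧ F v - F u ≤ v - u) ∧ F 0 = 0

lemma mem0I : (0:ℝ) ∈ Set.Icc (0:ℝ) 1 := Set.left_mem_Icc.mpr zero_le_one

lemma mem1I : (1:ℝ) ∈ Set.Icc (0:ℝ) 1 := Set.right_mem_Icc.mpr zero_le_one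

lemma goodF.nonneg (h : goodF F) : ∀ t ∈ Set.Icc (0:ℝ) 1, (0:ℝ) ≤ F t := by
  intro t ht
  have := (h.1 0 t mem0I ht ht.1).1
  linarith [h.2]

lemma gap_of_monoLip (hM : MonotoneOn F (Set.Icc (0:ℝ) 1))
    (hL : LipschitzOnWith 1 F (Set.Icc (0:ℝ) 1)) :
    ∀ u v : ℝ, u ∈ Set.Icc (0:ℝ) 1 → v ∈ Set.Icc (0:ℝ) 1 → u ≤ v →
      0 ≤ F v - F u ∧ F v - F u ≤ v - u := by
  intro u v hu hv huv
  refine ⟨by linarith [hM hu hv huv], ?_⟩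
  have hd := (lipschitzOnWith_iff_dist_le_mul.mp hL) u hu v hv
  rw [Real.dist_eq, Real.dist_eq, NNReal.coe_one, one_mul] at hd
  have h1 : F v - F u ≤ |F u - F v| := by rw [abs_sub_comm]; exact le_abs_self _
  have h2 : |u - v| = v - u := by rw [abs_sub_comm]; exact abs_of_nonneg (by linarith)
  linarith

lemma env_nonneg (h : goodF F) {x : ℝ} (hx : x ∈ Set.Icc (0:ℝ) 1) :
    0 ≤ convEnv F x :=
  le_convEnv (convexOn_const 0 (convex_Icc _ _)) (fun t ht => h.nonneg t ht) hx

lemma env_zero (h : goodF F) : convEnv F 0 = 0 := by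
  have h1 := convEnv_le h.nonneg mem0I
  have h2 := env_nonneg h mem0I
  rw [h.2] at h1
  linarith

lemma env_line (h : goodF F) {x : ℝ} (hx : x ∈ Set.Icc (0:ℝ) 1) :
    F 1 - 1 + x ≤ convEnv F x := by
  have hcx : ConvexOn ℝ (Set.Icc (0:ℝ) 1)
      (fun t => (0:ℝ) * (fun _ : ℝ => (0:ℝ)) t + (1 * t + (F 1 - 1))) :=
    convexOn_linComb (convexOn_const 0 (convex_Icc _ _)) 0 1 (F 1 - 1) le_rfl
  have hle : ∀ t ∈ Set.Icc (0:ℝ) 1,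
      (0:ℝ) * (fun _ : ℝ => (0:ℝ)) t + (1 * t + (F 1 - 1)) ≤ F t := by
    intro t ht
    have := (h.1 t 1 ht mem1I ht.2).2
    simp only [zero_mul, one_mul, zero_add]
    linarith
  have := le_convEnv hcx hle hx
  simp only [zero_mul, one_mul, zero_add] at this
  linarith

lemma env_convex (h : goodF F) : ConvexOn ℝ (Set.Icc (0:ℝ) 1) (convEnv F) := by
  refine ⟨convex_Icc _ _, fun u hu v hv p q hp hq hpq => ?_⟩
  refine csSup_le (SSet_nonempty h.nonneg _) ?_
  rintro y ⟨g, hg1, hg2, rfl⟩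
  have h1 := hg1.2 hu hv hp hq hpq
  have h2 : g u ≤ convEnv F u := le_convEnv hg1 hg2 hu
  have h3 : g v ≤ convEnv F v := le_convEnv hg1 hg2 hv
  simp only [smul_eq_mul] at h1 ⊢
  nlinarith [mul_le_mul_of_nonneg_left h2 hp, mul_le_mul_of_nonneg_left h3 hq]

lemma env_gap (h : goodF F) : ∀ u v : ℝ, u ∈ Set.Icc (0:ℝ) 1 → v ∈ Set.Icc (0:ℝ) 1 →
    u ≤ v → 0 ≤ convEnv F v - convEnv F u ∧ convEnv F v - convEnv F u ≤ v - u := by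
  intro u v hu hv huv
  rcases eq_or_lt_of_le huv with rfl | hlt
  · constructor <;> simp
  constructor
  · rcases eq_or_lt_of_le hu.1 with h0u | h0u
    · have h1 := env_nonneg h hv
      rw [← h0u, env_zero h]
      linarith
    · have hs := (env_convex h).slope_mono_adjacent mem0I hv h0u hlt
      have hnn : 0 ≤ (convEnv F u - convEnv F 0) / (u - 0) :=
        div_nonneg (by rw [env_zero h]; linarith [env_nonneg h hu]) (by linarith)
      by_contra hcon
      push_neg at hcon
      have : (convEnv F v - convEnv F u) / (v - u) < 0 :=
        div_neg_of_neg_of_pos (by linarith) (by linarith)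
      linarith
  · rcases eq_or_lt_of_le hv.2 with hv1 | hv1
    · have e1 := convEnv_le h.nonneg mem1I
      have e2 := env_line h hu
      rw [hv1]
      linarith
    · have hs := (env_convex h).slope_mono_adjacent hu mem1I hlt hv1
      have e1 := convEnv_le h.nonneg mem1I
      have e2 := env_line h hv
      have hub : (convEnv F 1 - convEnv F v) / (1 - v) ≤ 1 := by
        rw [div_le_one (by linarith)]; linarith
      have h3 := hs.trans hub
      rw [div_le_one (by linarith)] at h3
      linarith

lemma env_ae_diff (h : goodF F) :
    ∀ᵐ x : ℝ, x ∈ Set.Ioo (0:ℝ) 1 → DifferentiableAt ℝ (convEnv F) x := by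
  have hlip : LipschitzOnWith 1 (convEnv F) (Set.Icc (0:ℝ) 1) := by
    rw [lipschitzOnWith_iff_dist_le_mul]
    intro u hu v hv
    rw [Real.dist_eq, Real.dist_eq, NNReal.coe_one, one_mul]
    rcases le_total u v with hle | hle
    · obtain ⟨h1, h2⟩ := env_gap h u v hu hv hle
      rw [abs_sub_comm u v, abs_of_nonneg (by linarith : (0:ℝ) ≤ v - u),
        abs_sub_comm (convEnv F u) (convEnv F v),
        abs_of_nonneg (by linarith : (0:ℝ) ≤ convEnv F v - convEnv F u)]
      linarith
    · obtain ⟨h1, h2⟩ := env_gap h v u hv hu hle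
      rw [abs_of_nonneg (by linarith : (0:ℝ) ≤ u - v),
        abs_of_nonneg (by linarith : (0:ℝ) ≤ convEnv F u - convEnv F v)]
      linarith
  obtain ⟨g, hgL, hEq⟩ := hlip.extend_real
  filter_upwards [hgL.ae_differentiableAt_of_real] with z hz hzI
  refine hz.congr_of_eventuallyEq ?_
  filter_upwards [Ioo_mem_nhds hzI.1 hzI.2] with t ht
  exact hEq (Set.Ioo_subset_Icc_self ht)

lemma env_deriv_mem (h : goodF F) {x : ℝ} (hx : x ∈ Set.Ioo (0:ℝ) 1) :
    deriv (convEnv F) x ∈ Set.Icc (0:ℝ) 1 :=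
  deriv_mem_Icc_of_Ioo (fun u v hu hv huv => by
    obtain ⟨h1, h2⟩ := env_gap h u v (Set.Ioo_subset_Icc_self hu)
      (Set.Ioo_subset_Icc_self hv) huv
    exact ⟨by linarith, h2⟩) hx

/-! ### Affine perturbation of the envelope -/

lemma env_affine {lam : ℝ} (hl0 : 0 < lam) (hl1 : lam < 1)
    (hFnn : ∀ t ∈ Set.Icc (0:ℝ) 1, (0:ℝ) ≤ F t)
    {x : ℝ} (hx : x ∈ Set.Icc (0:ℝ) 1) :
    convEnv (fun t => (1-lam) * F t + (lam/2) * clampR t) x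
      = (1-lam) * convEnv F x + (lam/2) * x := by
  have h1l : (0:ℝ) < 1 - lam := by linarith
  have hFlnn : ∀ t ∈ Set.Icc (0:ℝ) 1, (0:ℝ) ≤ (1-lam) * F t + (lam/2) * clampR t := by
    intro t ht
    have := hFnn t ht
    have := (clampR_mem t).1
    nlinarith
  apply le_antisymm
  · refine csSup_le (SSet_nonempty hFlnn x) ?_
    rintro y ⟨g, hg1, hg2, rfl⟩
    have hg1' : ConvexOn ℝ (Set.Icc (0:ℝ) 1)
        (fun t => (1/(1-lam)) * g t + ((-(lam/2)/(1-lam)) * t + 0)) :=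
      convexOn_linComb hg1 _ _ _ (by positivity)
    have hg2' : ∀ t ∈ Set.Icc (0:ℝ) 1,
        (1/(1-lam)) * g t + ((-(lam/2)/(1-lam)) * t + 0) ≤ F t := by
      intro t ht
      have h2 : g t ≤ (1-lam) * F t + (lam/2) * clampR t := hg2 t ht
      rw [clampR_of_mem ht] at h2
      have hkey : g t - (lam/2) * t ≤ (1-lam) * F t := by linarith
      have hrw : (1/(1-lam)) * g t + ((-(lam/2)/(1-lam)) * t + 0)
          = (g t - (lam/2)*t) / (1-lam) := by
        field_simp
        ring
      rw [hrw, div_le_iff₀ h1l]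
      linarith
    have hle := le_convEnv hg1' hg2' hx
    have hgx : g x = (1-lam) * ((1/(1-lam)) * g x + ((-(lam/2)/(1-lam)) * x + 0))
        + (lam/2) * x := by
      field_simp
      ring
    rw [hgx]
    have := mul_le_mul_of_nonneg_left hle h1l.le
    linarith
  · have hstep : convEnv F x ≤ (convEnv (fun t => (1-lam) * F t + (lam/2) * clampR t) x
        - (lam/2) * x) / (1-lam) := by
      refine csSup_le (SSet_nonempty hFnn x) ?_
      rintro y ⟨g, hg1, hg2, rfl⟩
      rw [le_div_iff₀ h1l]
      have hg1' : ConvexOn ℝ (Set.Icc (0:ℝ) 1) (fun t => (1-lam) * g t + ((lam/2) * t + 0)) :=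
        convexOn_linComb hg1 _ _ _ h1l.le
      have hg2' : ∀ t ∈ Set.Icc (0:ℝ) 1,
          (1-lam) * g t + ((lam/2) * t + 0) ≤ (1-lam) * F t + (lam/2) * clampR t := by
        intro t ht
        have := hg2 t ht
        rw [clampR_of_mem ht]
        nlinarith
      have := le_convEnv hg1' hg2' hx
      linarith
    rw [le_div_iff₀ h1l] at hstep
    linarith

end EnvProps

/-! ### Derivative transfer along the affine perturbation -/

lemma deriv_affine_of_eq {A B : ℝ → ℝ} {lam : ℝ}
    (hAB : ∀ t ∈ Set.Ioo (0:ℝ) 1, B t = (1-lam) * A t + (lam/2) * t)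
    {x : ℝ} (hx : x ∈ Set.Ioo (0:ℝ) 1) (hd : DifferentiableAt ℝ A x) :
    deriv B x = (1-lam) * deriv A x + lam/2 := by
  have hev : B =ᶠ[nhds x] fun t => (1-lam) * A t + (lam/2) * t := by
    filter_upwards [Ioo_mem_nhds hx.1 hx.2] with t ht
    exact hAB t ht
  rw [hev.deriv_eq]
  have h1 : HasDerivAt (fun t => (1-lam) * A t + (lam/2) * t)
      ((1-lam) * deriv A x + (lam/2) * 1) x :=
    (hd.hasDerivAt.const_mul (1-lam)).add (HasDerivAt.const_mul (lam/2) (hasDerivAt_id x))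
  rw [h1.deriv, mul_one]

lemma not_diff_transfer {A B : ℝ → ℝ} {lam : ℝ} (hl1 : lam < 1)
    (hAB : ∀ t ∈ Set.Ioo (0:ℝ) 1, B t = (1-lam) * A t + (lam/2) * t)
    {x : ℝ} (hx : x ∈ Set.Ioo (0:ℝ) 1) (hnd : ¬ DifferentiableAt ℝ A x) :
    ¬ DifferentiableAt ℝ B x := by
  intro hdB
  apply hnd
  have h1l : (1:ℝ) - lam ≠ 0 := ne_of_gt (by linarith)
  have hev : A =ᶠ[nhds x] fun t => (1/(1-lam)) * B t + (-(lam/2)/(1-lam)) * t := by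
    filter_upwards [Ioo_mem_nhds hx.1 hx.2] with t ht
    rw [hAB t ht]
    field_simp
    ring
  have hid : DifferentiableAt ℝ (fun t : ℝ => t) x := differentiableAt_id
  exact ((hdB.const_mul (1/(1-lam))).add
    (hid.const_mul (-(lam/2)/(1-lam)))).congr_of_eventuallyEq hev

/-! ### Integral comparison helpers -/

lemma intervalIntegrable_of_bound (h : ℝ → ℝ) (C : ℝ) (hm : Measurable h)
    (hb : ∀ x ∈ Set.Ioo (0:ℝ) 1, |h x| ≤ C) :
    IntervalIntegrable h volume 0 1 := by
  rw [intervalIntegrable_iff_integrableOn_Ioc_of_le zero_le_one]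
  have hone : ∀ᵐ x ∂(volume.restrict (Set.Ioc (0:ℝ) 1)), x ∈ Set.Ioo (0:ℝ) 1 := by
    have h1 : ∀ᵐ x : ℝ, x ≠ 1 := by
      rw [ae_iff]
      simpa using Real.volume_singleton (a := 1)
    filter_upwards [ae_restrict_mem measurableSet_Ioc, ae_restrict_of_ae h1] with x hx hx1
    exact ⟨hx.1, lt_of_le_of_ne hx.2 hx1⟩
  refine Integrable.mono' (g := fun _ => C)
    (integrableOn_const measure_Ioc_lt_top.ne) hm.aestronglyMeasurable ?_
  filter_upwards [hone] with x hx
  simpa [Real.norm_eq_abs] using hb x hx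

lemma integral_le_add_const {h1 h2 : ℝ → ℝ} {C D : ℝ}
    (hm1 : Measurable h1) (hm2 : Measurable h2)
    (hb1 : ∀ x ∈ Set.Ioo (0:ℝ) 1, |h1 x| ≤ C) (hb2 : ∀ x ∈ Set.Ioo (0:ℝ) 1, |h2 x| ≤ C)
    (hpt : ∀ᵐ x : ℝ, x ∈ Set.Ioo (0:ℝ) 1 → h2 x ≤ h1 x + D) :
    (∫ x in (0:ℝ)..1, h2 x) ≤ (∫ x in (0:ℝ)..1, h1 x) + D := by
  have i1 := intervalIntegrable_of_bound h1 C hm1 hb1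
  have i2 := intervalIntegrable_of_bound h2 C hm2 hb2
  have i1' : IntervalIntegrable (fun x => h1 x + D) volume 0 1 :=
    i1.add intervalIntegrable_const
  have hIoo : ∀ᵐ x ∂(volume.restrict (Set.Icc (0:ℝ) 1)), x ∈ Set.Ioo (0:ℝ) 1 := by
    have hnull : (volume : Measure ℝ) ({0, 1} : Set ℝ) = 0 := by
      rw [Set.insert_eq]
      exact measure_union_null Real.volume_singleton Real.volume_singleton
    have h1' : ∀ᵐ x : ℝ, x ∉ ({0, 1} : Set ℝ) := by
      rw [ae_iff]
      have hset : {a : ℝ | ¬ a ∉ ({0, 1} : Set ℝ)} = ({0, 1} : Set ℝ) := by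
        ext y; simp; tauto
      rw [hset]
      exact hnull
    filter_upwards [ae_restrict_mem measurableSet_Icc, ae_restrict_of_ae h1'] with x hx hx1
    simp only [Set.mem_insert_iff, Set.mem_singleton_iff, not_or] at hx1
    exact ⟨lt_of_le_of_ne hx.1 (Ne.symm hx1.1), lt_of_le_of_ne hx.2 hx1.2⟩
  have hmono := intervalIntegral.integral_mono_ae_restrict zero_le_one i2 i1'
    (by filter_upwards [hIoo, ae_restrict_of_ae hpt] with x hx hx2; exact hx2 hx)
  calc (∫ x in (0:ℝ)..1, h2 x) ≤ ∫ x in (0:ℝ)..1, (h1 x + D) := hmono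
  _ = (∫ x in (0:ℝ)..1, h1 x) + ∫ x in (0:ℝ)..1, D :=
      intervalIntegral.integral_add i1 intervalIntegrable_const
  _ = (∫ x in (0:ℝ)..1, h1 x) + D := by simp

lemma abs_Hent_le {u : ℝ} (h0 : 0 ≤ u) (h1 : u ≤ 1) : |Hent u| ≤ 2 := by
  have p1 := neg_one_le_mul_log h0 h1
  have p2 := neg_one_le_mul_log (by linarith : (0:ℝ) ≤ 1 - u) (by linarith)
  have q1 : u * Real.log u ≤ 0 := by
    have := Real.log_nonpos h0 h1
    nlinarith
  have q2 : (1 - u) * Real.log (1 - u) ≤ 0 := by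
    have := Real.log_nonpos (by linarith : (0:ℝ) ≤ 1 - u) (by linarith)
    nlinarith
  rw [abs_le]
  constructor <;> (simp only [Hent]; linarith)

end Stmt16Aux

open Stmt16Aux Set MeasureTheory Filter

set_option maxHeartbeats 2000000 in
/-- Lemma 4.3: for any open `U ⊆ ℝ^{d+1}`, the infimum of the finite-dimensional rate function
over `U` equals its infimum over `U ∩ cone°`, where `cone°` is the open cone of strictly
increasing, strictly `1`-Lipschitz-compatible coordinate vectors. -/
theorem stmt16 (a b : ℝ) (ha : 0 ≤ a) (hb : 0 ≤ b) (hab : a * b < 1)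
    (k : ℕ) (hk : 1 ≤ k) (θ : Fin (k+1) → ℝ)
    (hθ0 : 0 < θ 0) (hθmono : StrictMono θ) (hθlast : θ (Fin.last k) = 1)
    (U : Set (Fin (k+1) → ℝ)) (hU : IsOpen U) :
    ⨅ x ∈ U, rateFd a b k θ x =
      ⨅ x ∈ U ∩ {x : Fin (k+1) → ℝ |
        (0 < x 0 ∧ x 0 < θ 0) ∧
          ∀ j : Fin k, 0 < x j.succ - x j.castSucc ∧
            x j.succ - x j.castSucc < θ j.succ - θ j.castSucc},
        rateFd a b k θ x := by
  classical
  set S : Set (Fin (k+1) → ℝ) := U ∩ {x : Fin (k+1) → ℝ |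
        (0 < x 0 ∧ x 0 < θ 0) ∧
          ∀ j : Fin k, 0 < x j.succ - x j.castSucc ∧
            x j.succ - x j.castSucc < θ j.succ - θ j.castSucc} with hS
  have hSU : S ⊆ U := by rw [hS]; exact Set.inter_subset_left
  refine le_antisymm (iInf_le_iInf_of_subset hSU) ?_
  refine le_iInf₂ fun x hxU => ?_
  have hRfd : rateFd a b k θ x
      = ⨅ f : {f : C0Sp // ∀ j, evalC0 f (θ j) = x j}, rateI a b f.val := rfl
  rw [hRfd]
  refine le_iInf fun f => ?_
  by_cases hreg : MonotoneOn (extendF f.val.val) (Set.Icc (0:ℝ) 1) ∧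
      LipschitzOnWith 1 (extendF f.val.val) (Set.Icc (0:ℝ) 1)
  swap
  · simp only [rateI]
    rw [if_neg hreg]
    exact le_top
  obtain ⟨hM, hL⟩ := hreg
  simp only [rateI]
  rw [if_pos (And.intro hM hL)]
  set F : ℝ → ℝ := extendF f.val.val with hFdef
  -- basic facts about F
  have hgapF : ∀ u v : ℝ, u ∈ Set.Icc (0:ℝ) 1 → v ∈ Set.Icc (0:ℝ) 1 → u ≤ v →
      0 ≤ F v - F u ∧ F v - F u ≤ v - u := gap_of_monoLip hM hL
  have hF0 : F 0 = 0 := by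
    rw [hFdef]
    simp only [extendF]
    rw [Set.projIcc_left]
    exact f.val.prop
  have hgoodF : goodF F := ⟨hgapF, hF0⟩
  have hFnn : ∀ t ∈ Set.Icc (0:ℝ) 1, (0:ℝ) ≤ F t := hgoodF.nonneg
  have hclamp : ∀ t : ℝ, F (clampR t) = F t := by
    intro t
    rw [hFdef]
    simp only [extendF]
    congr 1
    rw [Set.projIcc_of_mem zero_le_one (clampR_mem t)]
    exact Subtype.ext rfl
  have hFmonoG : Monotone F := by
    intro s t hst
    rw [← hclamp s, ← hclamp t]
    exact hM (clampR_mem s) (clampR_mem t) (monotone_clampR hst)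
  have hFgapG : ∀ u v : ℝ, u ≤ v → F v - F u ≤ v - u := by
    intro u v huv
    have h1 := (hgapF (clampR u) (clampR v) (clampR_mem u) (clampR_mem v)
      (monotone_clampR huv)).2
    have h3 := clampR_dist v u
    have h4 : 0 ≤ clampR v - clampR u := by linarith [monotone_clampR huv]
    rw [abs_of_nonneg h4, abs_of_nonneg (by linarith : (0:ℝ) ≤ v - u)] at h3
    calc F v - F u = F (clampR v) - F (clampR u) := by rw [hclamp u, hclamp v]
    _ ≤ clampR v - clampR u := h1
    _ ≤ v - u := h3
  set r : ℝ := (∫ x in (0:ℝ)..1, Hent (deriv F x)) +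
      (∫ x in (0:ℝ)..1,
        (deriv (convEnv F) x * Real.log (Gstar a b F x) +
          (1 - deriv (convEnv F) x) * Real.log (1 - Gstar a b F x))) -
      Real.log (Jfun a b) with hrdef
  suffices hmain : ∀ δ : ℝ, 0 < δ →
      (⨅ y ∈ S, rateFd a b k θ y) ≤ ((r + δ : ℝ) : EReal) by
    by_contra hcon
    push_neg at hcon
    obtain ⟨c, hc1, hc2⟩ := EReal.lt_iff_exists_real_btwn.mp hcon
    have hrc : r < c := by exact_mod_cast hc1
    have h := hmain (c - r) (by linarith)
    rw [show r + (c - r) = c by ring] at h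
    exact absurd (h.trans_lt hc2) (lt_irrefl _)
  intro δ hδ
  -- θ and x facts
  have hθmem : ∀ j, θ j ∈ Set.Icc (0:ℝ) 1 := by
    intro j
    constructor
    · exact le_of_lt (lt_of_lt_of_le hθ0 (hθmono.monotone (Fin.zero_le j)))
    · rw [← hθlast]; exact hθmono.monotone (Fin.le_last j)
  have hxval : ∀ j, x j = F (θ j) := by
    intro j
    rw [hFdef]
    exact (f.prop j).symm
  have hx01 : ∀ j, 0 ≤ x j ∧ x j ≤ 1 := by
    intro j
    rw [hxval j]
    constructor
    · exact hFnn (θ j) (hθmem j)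
    · have h1 := (hgapF (θ j) 1 (hθmem j) mem1I (hθmem j).2).1
      have h2 := (hgapF 0 1 mem0I mem1I zero_le_one).2
      rw [hF0] at h2
      linarith
  obtain ⟨ε, hε, hball⟩ := Metric.isOpen_iff.mp hU x hxU
  -- constants
  have hb1 : (0:ℝ) < 1 + b := by linarith
  have ha1 : (0:ℝ) < 1 + a := by linarith
  have hβ0 : (0:ℝ) < 1/(1+b) := by positivity
  have hβ1 : 1/(1+b) ≤ 1 := by rw [div_le_one hb1]; linarith
  have hα0 : 0 ≤ a/(1+a) := by positivity
  have hα1 : a/(1+a) < 1 := by rw [div_lt_one ha1]; linarith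
  have hαβ : a/(1+a) ≤ 1/(1+b) := by
    rw [div_le_div_iff₀ ha1 hb1]
    nlinarith
  set C2 : ℝ := 2 - Real.log (1/(1+b)) - Real.log (1 - a/(1+a)) with hC2def
  have hC2nn : 0 ≤ C2 := by
    have l1 := Real.log_nonpos hβ0.le hβ1
    have l2 := Real.log_nonpos (by linarith : (0:ℝ) ≤ 1 - a/(1+a)) (by linarith)
    rw [hC2def]
    linarith
  set lam : ℝ := min (min (1/2) (ε/4)) (δ / (2 + C2)) with hlamdef
  have hl0 : 0 < lam := lt_min (lt_min (by norm_num) (by positivity)) (by positivity)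
  have hl1 : lam < 1 :=
    lt_of_le_of_lt ((min_le_left _ _).trans (min_le_left _ _)) (by norm_num)
  have hlamε : lam ≤ ε/4 := (min_le_left _ _).trans (min_le_right _ _)
  have hlamδ : lam * (2 + C2) ≤ δ := by
    have h1 : lam ≤ δ / (2 + C2) := min_le_right _ _
    have h2 : (0:ℝ) < 2 + C2 := by linarith
    calc lam * (2 + C2) ≤ (δ / (2 + C2)) * (2 + C2) :=
          mul_le_mul_of_nonneg_right h1 h2.le
    _ = δ := by field_simp
  -- the perturbed function
  set flC : C(Set.Icc (0:ℝ) 1, ℝ) :=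
    ⟨fun t => (1-lam) * f.val.val t + (lam/2) * (t : ℝ),
      ((continuous_const.mul f.val.val.continuous).add
        (continuous_const.mul continuous_subtype_val))⟩ with hflC
  have hfl0 : flC ⟨0, Set.left_mem_Icc.mpr zero_le_one⟩ = 0 := by
    simp only [hflC, ContinuousMap.coe_mk]
    rw [f.val.prop]
    norm_num
  set fl : C0Sp := ⟨flC, hfl0⟩ with hfl
  set Fl : ℝ → ℝ := fun t => (1-lam) * F t + (lam/2) * clampR t with hFl
  have hFleq : extendF fl.val = Fl := funext fun t => rfl
  -- regularity of Fl
  have hMfl : MonotoneOn Fl (Set.Icc (0:ℝ) 1) := by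
    intro u hu v hv huv
    simp only [hFl]
    have h1 := hM hu hv huv
    have h2 := monotone_clampR huv
    have e1 := mul_le_mul_of_nonneg_left h1 (by linarith : (0:ℝ) ≤ 1 - lam)
    have e2 := mul_le_mul_of_nonneg_left h2 (by linarith : (0:ℝ) ≤ lam/2)
    linarith
  have hLfl : LipschitzOnWith 1 Fl (Set.Icc (0:ℝ) 1) := by
    rw [lipschitzOnWith_iff_dist_le_mul]
    intro u hu v hv
    rw [Real.dist_eq, Real.dist_eq, NNReal.coe_one, one_mul]
    simp only [hFl]
    have h1 := (lipschitzOnWith_iff_dist_le_mul.mp hL) u hu v hv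
    rw [Real.dist_eq, Real.dist_eq, NNReal.coe_one, one_mul] at h1
    have h2 := clampR_dist u v
    calc |((1-lam) * F u + lam/2 * clampR u) - ((1-lam) * F v + lam/2 * clampR v)|
        = |(1-lam) * (F u - F v) + (lam/2) * (clampR u - clampR v)| := by congr 1; ring
    _ ≤ |(1-lam) * (F u - F v)| + |(lam/2) * (clampR u - clampR v)| := abs_add_le _ _
    _ = (1-lam) * |F u - F v| + (lam/2) * |clampR u - clampR v| := by
        rw [abs_mul, abs_mul, abs_of_nonneg (by linarith : (0:ℝ) ≤ 1 - lam),
          abs_of_nonneg (by linarith : (0:ℝ) ≤ lam/2)]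
    _ ≤ (1-lam) * |u - v| + (lam/2) * |u - v| :=
        add_le_add (mul_le_mul_of_nonneg_left h1 (by linarith))
          (mul_le_mul_of_nonneg_left h2 (by linarith))
    _ ≤ |u - v| := by
        have e3 : 0 ≤ (lam/2) * |u - v| := mul_nonneg (by linarith) (abs_nonneg _)
        linarith
  have hgapFl : ∀ u v : ℝ, u ∈ Set.Icc (0:ℝ) 1 → v ∈ Set.Icc (0:ℝ) 1 → u ≤ v →
      0 ≤ Fl v - Fl u ∧ Fl v - Fl u ≤ v - u := gap_of_monoLip hMfl hLfl
  have hFl0 : Fl 0 = 0 := by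
    simp only [hFl]
    rw [hF0, clampR_of_mem mem0I]
    ring
  have hgoodFl : goodF Fl := ⟨hgapFl, hFl0⟩
  have hFlmonoG : Monotone Fl := by
    intro s t hst
    simp only [hFl]
    have h1 := hFmonoG hst
    have h2 := monotone_clampR hst
    have e1 := mul_le_mul_of_nonneg_left h1 (by linarith : (0:ℝ) ≤ 1 - lam)
    have e2 := mul_le_mul_of_nonneg_left h2 (by linarith : (0:ℝ) ≤ lam/2)
    linarith
  have hFlgapG : ∀ u v : ℝ, u ≤ v → Fl v - Fl u ≤ v - u := by
    intro u v huv
    simp only [hFl]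
    have h1 := hFgapG u v huv
    have h2 := clampR_dist v u
    have h3 := monotone_clampR huv
    rw [abs_of_nonneg (by linarith : (0:ℝ) ≤ clampR v - clampR u),
      abs_of_nonneg (by linarith : (0:ℝ) ≤ v - u)] at h2
    have e1 := mul_le_mul_of_nonneg_left h1 (by linarith : (0:ℝ) ≤ 1 - lam)
    have e2 := mul_le_mul_of_nonneg_left h2 (by linarith : (0:ℝ) ≤ lam/2)
    have e3 : 0 ≤ (lam/2) * (v - u) := mul_nonneg (by linarith) (by linarith)
    linarith
  -- the perturbed point
  set xl : Fin (k+1) → ℝ := fun j => (1-lam) * x j + (lam/2) * θ j with hxl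
  have hconstr : ∀ j, evalC0 fl (θ j) = xl j := by
    intro j
    show extendF fl.val (θ j) = xl j
    rw [hFleq]
    simp only [hFl, hxl]
    rw [clampR_of_mem (hθmem j), ← hxval j]
  have hxlU : xl ∈ U := by
    apply hball
    rw [Metric.mem_ball, dist_pi_lt_iff hε]
    intro j
    rw [Real.dist_eq]
    have h1 : xl j - x j = lam * (θ j / 2 - x j) := by simp only [hxl]; ring
    have hθj := hθmem j
    have hxj := hx01 j
    have h2 : |θ j / 2 - x j| ≤ 2 := by
      rw [abs_le]
      constructor <;> nlinarith [hθj.1, hθj.2, hxj.1, hxj.2]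
    calc |xl j - x j| = lam * |θ j / 2 - x j| := by
          rw [h1, abs_mul, abs_of_nonneg hl0.le]
    _ ≤ lam * 2 := mul_le_mul_of_nonneg_left h2 hl0.le
    _ < ε := by linarith [hlamε]
  have hxlT : (0 < xl 0 ∧ xl 0 < θ 0) ∧
      ∀ j : Fin k, 0 < xl j.succ - xl j.castSucc ∧
        xl j.succ - xl j.castSucc < θ j.succ - θ j.castSucc := by
    constructor
    · constructor
      · have hx0 : 0 ≤ x 0 := (hx01 0).1
        simp only [hxl]
        nlinarith [hθ0]
      · have hx0θ : x 0 ≤ θ 0 := by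
          rw [hxval 0]
          have := (hgapF 0 (θ 0) mem0I (hθmem 0) (hθmem 0).1).2
          rw [hF0] at this
          linarith
        simp only [hxl]
        nlinarith [hθ0]
    · intro j
      have hcs : θ j.castSucc < θ j.succ := hθmono (Fin.castSucc_lt_succ (i := j))
      have hgapj := hgapF (θ j.castSucc) (θ j.succ) (hθmem j.castSucc) (hθmem j.succ) hcs.le
      have e1 : x j.succ - x j.castSucc = F (θ j.succ) - F (θ j.castSucc) := by
        rw [hxval, hxval]
      have h1 : 0 ≤ x j.succ - x j.castSucc := by rw [e1]; exact hgapj.1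
      have h2 : x j.succ - x j.castSucc ≤ θ j.succ - θ j.castSucc := by
        rw [e1]; exact hgapj.2
      constructor
      · simp only [hxl]; nlinarith
      · simp only [hxl]; nlinarith
  -- the value of rateI at fl
  have hbranch : rateI a b fl = (((∫ x in (0:ℝ)..1, Hent (deriv Fl x)) +
      (∫ x in (0:ℝ)..1,
        (deriv (convEnv Fl) x * Real.log (Gstar a b Fl x) +
          (1 - deriv (convEnv Fl) x) * Real.log (1 - Gstar a b Fl x))) -
      Real.log (Jfun a b) : ℝ) : EReal) := by
    simp only [rateI]
    rw [hFleq, if_pos (And.intro hMfl hLfl)]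
  -- pointwise inequality for the entropy integrand
  have hFlt : ∀ s ∈ Set.Ioo (0:ℝ) 1, Fl s = (1-lam) * F s + (lam/2) * s := by
    intro s hs
    simp only [hFl]
    rw [clampR_of_mem (Set.Ioo_subset_Icc_self hs)]
  have hderF : ∀ t : ℝ, deriv F t ∈ Set.Icc (0:ℝ) 1 :=
    deriv_mem_Icc_of_global hFmonoG hFgapG
  have hderFl : ∀ t : ℝ, deriv Fl t ∈ Set.Icc (0:ℝ) 1 :=
    deriv_mem_Icc_of_global hFlmonoG hFlgapG
  have hptA : ∀ t ∈ Set.Ioo (0:ℝ) 1, Hent (deriv Fl t) ≤ Hent (deriv F t) + lam * 2 := by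
    intro t ht
    by_cases hd : DifferentiableAt ℝ F t
    · rw [deriv_affine_of_eq hFlt ht hd]
      exact keyA hl0 hl1 (hderF t).1 (hderF t).2
    · rw [deriv_zero_of_not_differentiableAt hd,
        deriv_zero_of_not_differentiableAt (not_diff_transfer hl1 hFlt ht hd)]
      linarith [hl0]
  -- pointwise inequality for the envelope integrand
  have henvFlt : ∀ s ∈ Set.Ioo (0:ℝ) 1,
      convEnv Fl s = (1-lam) * convEnv F s + (lam/2) * s := by
    intro s hs
    rw [hFl]
    exact env_affine hl0 hl1 hFnn (Set.Ioo_subset_Icc_self hs)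
  have hptB : ∀ᵐ t : ℝ, t ∈ Set.Ioo (0:ℝ) 1 →
      deriv (convEnv Fl) t * Real.log (Gstar a b Fl t) +
        (1 - deriv (convEnv Fl) t) * Real.log (1 - Gstar a b Fl t)
      ≤ deriv (convEnv F) t * Real.log (Gstar a b F t) +
        (1 - deriv (convEnv F) t) * Real.log (1 - Gstar a b F t) + lam * C2 := by
    filter_upwards [env_ae_diff hgoodF] with t hdt htI
    have hd := hdt htI
    have hv := env_deriv_mem hgoodF htI
    simp only [Gstar]
    rw [deriv_affine_of_eq henvFlt htI hd, hC2def]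
    exact key hα0 hα1 hβ0 hβ1 hαβ hl0 hl1 hv.1 hv.2
  -- integrability data
  have hmA1 : Measurable fun t => Hent (deriv F t) := by
    have hd : Measurable (deriv F) := measurable_deriv F
    simp only [Hent]
    exact (hd.mul (Real.measurable_log.comp hd)).add
      ((measurable_const.sub hd).mul (Real.measurable_log.comp (measurable_const.sub hd)))
  have hmA2 : Measurable fun t => Hent (deriv Fl t) := by
    have hd : Measurable (deriv Fl) := measurable_deriv Fl
    simp only [Hent]
    exact (hd.mul (Real.measurable_log.comp hd)).add
      ((measurable_const.sub hd).mul (Real.measurable_log.comp (measurable_const.sub hd)))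
  have hbA1 : ∀ t ∈ Set.Ioo (0:ℝ) 1, |Hent (deriv F t)| ≤ 2 :=
    fun t _ => abs_Hent_le (hderF t).1 (hderF t).2
  have hbA2 : ∀ t ∈ Set.Ioo (0:ℝ) 1, |Hent (deriv Fl t)| ≤ 2 :=
    fun t _ => abs_Hent_le (hderFl t).1 (hderFl t).2
  have hintA : (∫ t in (0:ℝ)..1, Hent (deriv Fl t))
      ≤ (∫ t in (0:ℝ)..1, Hent (deriv F t)) + lam * 2 :=
    integral_le_add_const hmA1 hmA2 hbA1 hbA2 (ae_of_all _ hptA)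
  -- B integrand bounds
  have hphibound : ∀ v : ℝ, 0 ≤ v → v ≤ 1 →
      |v * Real.log (min (max v (a/(1+a))) (1/(1+b))) +
        (1-v) * Real.log (1 - min (max v (a/(1+a))) (1/(1+b)))| ≤ C2 := by
    intro v h0v h1v
    have lb := phi_lb hα0 hα1 hβ0 hβ1 hαβ h0v h1v
    have ub := phi_ub hα0 hβ0 hβ1 h0v h1v
    rw [abs_le, hC2def]
    constructor
    · linarith
    · have l1 := Real.log_nonpos hβ0.le hβ1
      have l2 := Real.log_nonpos (by linarith : (0:ℝ) ≤ 1 - a/(1+a)) (by linarith)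
      linarith
  have hmB1 : Measurable fun t => deriv (convEnv F) t * Real.log (Gstar a b F t) +
      (1 - deriv (convEnv F) t) * Real.log (1 - Gstar a b F t) := by
    have hd : Measurable (deriv (convEnv F)) := measurable_deriv _
    have hG : Measurable (Gstar a b F) :=
      (hd.max measurable_const).min measurable_const
    exact (hd.mul (Real.measurable_log.comp hG)).add
      ((measurable_const.sub hd).mul (Real.measurable_log.comp (measurable_const.sub hG)))
  have hmB2 : Measurable fun t => deriv (convEnv Fl) t * Real.log (Gstar a b Fl t) +
      (1 - deriv (convEnv Fl) t) * Real.log (1 - Gstar a b Fl t) := by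
    have hd : Measurable (deriv (convEnv Fl)) := measurable_deriv _
    have hG : Measurable (Gstar a b Fl) :=
      (hd.max measurable_const).min measurable_const
    exact (hd.mul (Real.measurable_log.comp hG)).add
      ((measurable_const.sub hd).mul (Real.measurable_log.comp (measurable_const.sub hG)))
  have hbB1 : ∀ t ∈ Set.Ioo (0:ℝ) 1,
      |deriv (convEnv F) t * Real.log (Gstar a b F t) +
        (1 - deriv (convEnv F) t) * Real.log (1 - Gstar a b F t)| ≤ C2 := by
    intro t ht
    have hv := env_deriv_mem hgoodF ht
    simpa only [Gstar] using hphibound _ hv.1 hv.2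
  have hbB2 : ∀ t ∈ Set.Ioo (0:ℝ) 1,
      |deriv (convEnv Fl) t * Real.log (Gstar a b Fl t) +
        (1 - deriv (convEnv Fl) t) * Real.log (1 - Gstar a b Fl t)| ≤ C2 := by
    intro t ht
    have hv := env_deriv_mem hgoodFl ht
    simpa only [Gstar] using hphibound _ hv.1 hv.2
  have hintB : (∫ t in (0:ℝ)..1, (deriv (convEnv Fl) t * Real.log (Gstar a b Fl t) +
        (1 - deriv (convEnv Fl) t) * Real.log (1 - Gstar a b Fl t)))
      ≤ (∫ t in (0:ℝ)..1, (deriv (convEnv F) t * Real.log (Gstar a b F t) +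
        (1 - deriv (convEnv F) t) * Real.log (1 - Gstar a b F t))) + lam * C2 :=
    integral_le_add_const hmB1 hmB2 hbB1 hbB2 hptB
  -- final chain
  calc (⨅ y ∈ S, rateFd a b k θ y) ≤ rateFd a b k θ xl := by
        refine iInf₂_le xl ?_
        rw [hS]
        exact ⟨hxlU, hxlT⟩
  _ ≤ rateI a b fl := by
        have hRfd2 : rateFd a b k θ xl
            = ⨅ g : {g : C0Sp // ∀ j, evalC0 g (θ j) = xl j}, rateI a b g.val := rfl
        rw [hRfd2]
        exact iInf_le _ (⟨fl, hconstr⟩ : {g : C0Sp // ∀ j, evalC0 g (θ j) = xl j})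
  _ ≤ ((r + δ : ℝ) : EReal) := by
        rw [hbranch, EReal.coe_le_coe_iff, hrdef]
        linarith [hintA, hintB, hlamδ]
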